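/- Let Σ be a positive definite real matrix indexed by a nonempty finite type n, and let A ⊆ n be nonempty. Then Σ and Σ_{A,A} are invertible and ‖(Σ_{A,A})⁻¹‖ ≤ ‖Σ⁻¹‖ in spectral norm. -/

import Mathlib

open scoped Matrix.Norms.L2Operator

section Helpers
open Matrix

set_option linter.unusedSectionVars false
variable {n : Type*} [Fintype n] [DecidableEq n]

noncomputable def eu {n : Type*} [Fintype n] (x : n → ℝ) : EuclideanSpace ℝ n :=
  (WithLp.equiv 2 (n → ℝ)).symm x

lemma dot_eq_inner (x y : n → ℝ) : x ⬝ᵥ y = inner ℝ (eu x) (eu y) := by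
  rw [eu, eu, WithLp.equiv_symm_apply, EuclideanSpace.inner_toLp_toLp, star_trivial, dotProduct_comm]

lemma norm_sq_eu (x : n → ℝ) : ‖eu x‖ * ‖eu x‖ = x ⬝ᵥ x := by
  rw [dot_eq_inner, real_inner_self_eq_norm_mul_norm]

lemma dot_le_norms (x y : n → ℝ) : x ⬝ᵥ y ≤ ‖eu x‖ * ‖eu y‖ := by
  rw [dot_eq_inner]; exact real_inner_le_norm _ _

lemma norm_mulVec_le (M : Matrix n n ℝ) (x : n → ℝ) :
    ‖eu (M *ᵥ x)‖ ≤ ‖M‖ * ‖eu x‖ :=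
  M.l2_opNorm_mulVec (eu x)

lemma mul_dot {m : Type*} [Fintype m] (R : Matrix n m ℝ) (u v : m → ℝ) :
    (R *ᵥ u) ⬝ᵥ (R *ᵥ v) = u ⬝ᵥ ((Rᵀ * R) *ᵥ v) := by
  rw [← mulVec_mulVec, dotProduct_mulVec u Rᵀ (R *ᵥ v), vecMul_transpose]

lemma mulVec_dot (P : Matrix n n ℝ) (a b : n → ℝ) :
    (P *ᵥ a) ⬝ᵥ b = a ⬝ᵥ (Pᵀ *ᵥ b) := by
  rw [dotProduct_mulVec a Pᵀ b, vecMul_transpose]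

lemma conj_dot {m : Type*} [Fintype m] (P : Matrix n m ℝ) (B : Matrix n n ℝ) (u : m → ℝ) :
    u ⬝ᵥ ((Pᵀ * B * P) *ᵥ u) = (P *ᵥ u) ⬝ᵥ (B *ᵥ (P *ᵥ u)) := by
  rw [Matrix.mul_assoc, ← mulVec_mulVec, ← mulVec_mulVec,
    dotProduct_mulVec u Pᵀ (B *ᵥ (P *ᵥ u)), vecMul_transpose]

lemma transpose_eq_of_herm {M : Matrix n n ℝ} (h : M.IsHermitian) : Mᵀ = M := by
  rw [← Matrix.conjTranspose_eq_transpose_of_trivial, h.eq]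

lemma quad_le_opNorm (P : Matrix n n ℝ) (x : n → ℝ) :
    x ⬝ᵥ (P *ᵥ x) ≤ ‖P‖ * (x ⬝ᵥ x) :=
  calc x ⬝ᵥ (P *ᵥ x) ≤ ‖eu x‖ * ‖eu (P *ᵥ x)‖ := dot_le_norms _ _
  _ ≤ ‖eu x‖ * (‖P‖ * ‖eu x‖) :=
      mul_le_mul_of_nonneg_left (norm_mulVec_le _ _) (norm_nonneg _)
  _ = ‖P‖ * (x ⬝ᵥ x) := by rw [← norm_sq_eu]; ring

open scoped MatrixOrder in
lemma key1 (M : Matrix n n ℝ) (hM : M.PosDef) (x : n → ℝ) :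
    x ⬝ᵥ x ≤ ‖M⁻¹‖ * (x ⬝ᵥ (M *ᵥ x)) := by
  have hdet : IsUnit M.det := hM.det_pos.ne'.isUnit
  set R := CFC.sqrt M with hRdef
  have hRsym : Rᵀ = R := transpose_eq_of_herm (Matrix.nonneg_iff_posSemidef.mp (CFC.sqrt_nonneg M)).1
  have hRR : R * R = M := CFC.sqrt_mul_sqrt_self M hM.posSemidef.nonneg
  have hMsym : M⁻¹ᵀ = M⁻¹ := transpose_eq_of_herm hM.inv.1
  set u := M⁻¹ *ᵥ x with hu
  have h0 : x ⬝ᵥ x = (R *ᵥ u) ⬝ᵥ (R *ᵥ x) := by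
    rw [mul_dot, hRsym, hRR, hu, mulVec_dot, hMsym, mulVec_mulVec,
      Matrix.nonsing_inv_mul M hdet, Matrix.one_mulVec]
  have hMu : M *ᵥ u = x := by
    rw [hu, mulVec_mulVec, Matrix.mul_nonsing_inv M hdet, Matrix.one_mulVec]
  have h2 : ‖eu (R *ᵥ u)‖ * ‖eu (R *ᵥ u)‖ ≤ ‖M⁻¹‖ * (x ⬝ᵥ x) := by
    rw [norm_sq_eu, mul_dot, hRsym, hRR, hMu, dotProduct_comm]
    exact quad_le_opNorm _ _
  have h3 : ‖eu (R *ᵥ x)‖ * ‖eu (R *ᵥ x)‖ = x ⬝ᵥ (M *ᵥ x) := by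
    rw [norm_sq_eu, mul_dot, hRsym, hRR]
  have hxx : (0:ℝ) ≤ x ⬝ᵥ x := by
    rw [dot_eq_inner]; exact real_inner_self_nonneg
  have hMxx : (0:ℝ) ≤ x ⬝ᵥ (M *ᵥ x) := by
    simpa using hM.posSemidef.dotProduct_mulVec_nonneg x
  rcases eq_or_lt_of_le hxx with h | h
  · rw [← h]; positivity
  · have hsq : (x ⬝ᵥ x) * (x ⬝ᵥ x) ≤ (‖M⁻¹‖ * (x ⬝ᵥ x)) * (x ⬝ᵥ (M *ᵥ x)) := by
      calc (x ⬝ᵥ x) * (x ⬝ᵥ x)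
          ≤ (‖eu (R *ᵥ u)‖ * ‖eu (R *ᵥ x)‖) * (‖eu (R *ᵥ u)‖ * ‖eu (R *ᵥ x)‖) := by
            apply mul_self_le_mul_self hxx
            rw [h0]; exact dot_le_norms _ _
        _ = (‖eu (R *ᵥ u)‖ * ‖eu (R *ᵥ u)‖) * (‖eu (R *ᵥ x)‖ * ‖eu (R *ᵥ x)‖) := by ring
        _ ≤ (‖M⁻¹‖ * (x ⬝ᵥ x)) * (x ⬝ᵥ (M *ᵥ x)) := by
            rw [h3]
            exact mul_le_mul_of_nonneg_right h2 hMxx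
    have h4 : (x ⬝ᵥ x) * (x ⬝ᵥ x) ≤ (x ⬝ᵥ x) * (‖M⁻¹‖ * (x ⬝ᵥ (M *ᵥ x))) := by
      calc (x ⬝ᵥ x) * (x ⬝ᵥ x) ≤ (‖M⁻¹‖ * (x ⬝ᵥ x)) * (x ⬝ᵥ (M *ᵥ x)) := hsq
        _ = (x ⬝ᵥ x) * (‖M⁻¹‖ * (x ⬝ᵥ (M *ᵥ x))) := by ring
    exact le_of_mul_le_mul_left h4 h

lemma key2 (N : Matrix n n ℝ) (hN : N.PosDef) (c : ℝ) (hc : 0 ≤ c)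
    (h : ∀ y, y ⬝ᵥ y ≤ c * (y ⬝ᵥ (N *ᵥ y))) : ‖N⁻¹‖ ≤ c := by
  have hdet : IsUnit N.det := hN.det_pos.ne'.isUnit
  rw [Matrix.l2_opNorm_def]
  apply ContinuousLinearMap.opNorm_le_bound _ hc
  intro z
  set v : n → ℝ := WithLp.equiv 2 (n → ℝ) z with hv
  have hz : z = eu v := rfl
  show ‖eu (N⁻¹ *ᵥ v)‖ ≤ c * ‖z‖
  set w : n → ℝ := N⁻¹ *ᵥ v with hw
  have hNw : N *ᵥ w = v := by
    rw [hw, mulVec_mulVec, Matrix.mul_nonsing_inv N hdet, Matrix.one_mulVec]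
  have h1 : ‖eu w‖ * ‖eu w‖ ≤ c * (‖eu w‖ * ‖eu v‖) := by
    rw [norm_sq_eu]
    calc w ⬝ᵥ w ≤ c * (w ⬝ᵥ (N *ᵥ w)) := h w
      _ ≤ c * (‖eu w‖ * ‖eu v‖) := by
          rw [hNw]; exact mul_le_mul_of_nonneg_left (dot_le_norms _ _) hc
  rcases eq_or_lt_of_le (norm_nonneg (eu w)) with h2 | h2
  · rw [← h2]; rw [hz]; positivity
  · rw [hz]
    have : ‖eu w‖ * ‖eu w‖ ≤ (c * ‖eu v‖) * ‖eu w‖ := by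
      calc ‖eu w‖ * ‖eu w‖ ≤ c * (‖eu w‖ * ‖eu v‖) := h1
        _ = (c * ‖eu v‖) * ‖eu w‖ := by ring
    exact le_of_mul_le_mul_right this h2

end Helpers

open Matrix in
/-- for a positive definite real matrix `Sig` indexed by a nonempty
finite type `n` and a nonempty subset `A ⊆ n`, both `Sig` and the principal
submatrix `Sig_{A,A}` are invertible, and `‖(Sig_{A,A})⁻¹‖ ≤ ‖Sig⁻¹‖` in spectral
norm. -/
theorem stmt13 {n : Type*} [Fintype n] [Nonempty n] [DecidableEq n]
    (Sig : Matrix n n ℝ) (hSig : Sig.PosDef)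
    (A : Finset n) (hA : A.Nonempty) :
    IsUnit Sig ∧
    IsUnit (Sig.submatrix (Subtype.val : A → n) (Subtype.val : A → n)) ∧
    ‖(Sig.submatrix (Subtype.val : A → n) (Subtype.val : A → n))⁻¹‖ ≤ ‖Sig⁻¹‖ := by
  classical
  set P : Matrix n A ℝ := (1 : Matrix n n ℝ).submatrix id (Subtype.val : A → n) with hPdef
  have hPt : Pᵀ = (1 : Matrix n n ℝ).submatrix (Subtype.val : A → n) id := by
    rw [hPdef, Matrix.transpose_submatrix, Matrix.transpose_one]
  have e1 : (1 : Matrix n n ℝ).submatrix (Subtype.val : A → n) id * Sig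
      = Sig.submatrix Subtype.val id := by
    have := Matrix.submatrix_mul (1 : Matrix n n ℝ) Sig (Subtype.val : A → n) (id : n → n)
      (id : n → n) Function.bijective_id
    simpa using this.symm
  have e2 : Sig.submatrix (Subtype.val : A → n) id
        * (1 : Matrix n n ℝ).submatrix id (Subtype.val : A → n)
      = Sig.submatrix Subtype.val Subtype.val := by
    have := Matrix.submatrix_mul Sig (1 : Matrix n n ℝ) (Subtype.val : A → n) (id : n → n)
      (Subtype.val : A → n) Function.bijective_id
    simpa using this.symm
  have hP1 : Pᵀ * Sig * P = Sig.submatrix Subtype.val Subtype.val := by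
    rw [hPt, hPdef, e1, e2]
  have hPtP : Pᵀ * P = 1 := by
    have h11 := (Matrix.submatrix_mul (1 : Matrix n n ℝ) (1 : Matrix n n ℝ)
      (Subtype.val : A → n) (id : n → n) (Subtype.val : A → n) Function.bijective_id).symm
    rw [hPt, hPdef, h11, one_mul, Matrix.submatrix_one _ Subtype.val_injective]
  have hPapp : ∀ (y : A → ℝ) (a : A), (P *ᵥ y) (a : n) = y a := by
    intro y a
    simp [hPdef, Matrix.mulVec, Matrix.submatrix_apply, Matrix.one_apply, dotProduct,
      Subtype.val_inj]
  have hPinj : ∀ y : A → ℝ, P *ᵥ y = 0 → y = 0 := by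
    intro y hy; funext a
    have := hPapp y a
    rw [hy] at this
    simpa using this.symm
  have hquad : ∀ y : A → ℝ, y ⬝ᵥ ((Sig.submatrix Subtype.val Subtype.val) *ᵥ y)
      = (P *ᵥ y) ⬝ᵥ (Sig *ᵥ (P *ᵥ y)) := by
    intro y; rw [← hP1, conj_dot]
  have hPP : ∀ y : A → ℝ, y ⬝ᵥ y = (P *ᵥ y) ⬝ᵥ (P *ᵥ y) := by
    intro y
    rw [mul_dot, hPtP, Matrix.one_mulVec]
  have hSub : (Sig.submatrix (Subtype.val : A → n) (Subtype.val : A → n)).PosDef := by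
    refine Matrix.PosDef.of_dotProduct_mulVec_pos ?_ ?_
    · show _ᴴ = _
      rw [Matrix.conjTranspose_submatrix, hSig.1.eq]
    · intro y hy
      rw [star_trivial, hquad y]
      have hPy : P *ᵥ y ≠ 0 := fun h => hy (hPinj y h)
      simpa using hSig.dotProduct_mulVec_pos hPy
  refine ⟨hSig.isUnit, hSub.isUnit, ?_⟩
  apply key2 _ hSub _ (norm_nonneg _)
  intro y
  rw [hPP y, hquad y]
  exact key1 Sig hSig (P *ᵥ y)
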